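/- Let P(i) denote the product of the i smallest prime numbers (the i-th primorial, with P(0) = 1). Then for every integer t ≥ 1, C(P(t)) = Σ_{i=0}^{t−1} binom(t, i) · C(P(i)); that is, the sequence a(t) = C(P(t)) satisfies a(0) = 1 and the recursion a(t) = Σ_{i=0}^{t−1} binom(t,i) a(i) defining the ordered Bell (Fubini) numbers. -/

import Mathlib

open scoped BigOperators

/-- The number of finite sets `S` of positive integers such that every element of `S`
divides `v` and is greater than `1`, `S` is totally ordered by divisibility, and
`v ∈ S` whenever `v > 1`.  (The number of chains from a non-least element to the
greatest element in the divisor lattice of `v`.) -/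
def C (v : ℕ) : ℕ :=
  ((Nat.divisors v).powerset.filter
    (fun S : Finset ℕ =>
      (∀ n ∈ S, n ∣ v ∧ 1 < n) ∧
      (∀ a ∈ S, ∀ b ∈ S, a ∣ b ∨ b ∣ a) ∧
      (1 < v → v ∈ S))).card
/-- The `i`-th primorial: the product of the `i` smallest prime numbers. -/
noncomputable def primorialProd (i : ℕ) : ℕ :=
  ∏ j ∈ Finset.range i, Nat.nth Nat.Prime j

namespace Aux15

open Finset

/-- Chains of nonempty subsets of `T` containing `T` (when `T` is nonempty). -/
def chains (T : Finset ℕ) : Finset (Finset (Finset ℕ)) :=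
  T.powerset.powerset.filter fun 𝒞 =>
    (∀ A ∈ 𝒞, A.Nonempty) ∧ (∀ A ∈ 𝒞, ∀ B ∈ 𝒞, A ⊆ B ∨ B ⊆ A) ∧ (T.Nonempty → T ∈ 𝒞)

lemma mem_chains {T : Finset ℕ} {𝒞 : Finset (Finset ℕ)} :
    𝒞 ∈ chains T ↔ (∀ A ∈ 𝒞, A ⊆ T) ∧ (∀ A ∈ 𝒞, A.Nonempty) ∧
      (∀ A ∈ 𝒞, ∀ B ∈ 𝒞, A ⊆ B ∨ B ⊆ A) ∧ (T.Nonempty → T ∈ 𝒞) := by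
  simp only [chains, mem_filter, mem_powerset, and_assoc, and_congr_left_iff]
  intro _
  constructor
  · exact fun h A hA => mem_powerset.1 (h hA)
  · exact fun h A hA => mem_powerset.2 (h A hA)

lemma chains_empty : chains (∅ : Finset ℕ) = {∅} := by
  ext 𝒞
  simp only [mem_chains, mem_singleton]
  constructor
  · rintro ⟨h1, h2, -, -⟩
    by_contra h
    obtain ⟨A, hA⟩ := Finset.nonempty_iff_ne_empty.2 h
    exact Finset.not_nonempty_empty (Finset.subset_empty.1 (h1 A hA) ▸ h2 A hA)
  · rintro rfl
    refine ⟨by simp, by simp, by simp, by simp⟩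

/-- The number of chains only depends on the set through an injective image. -/
lemma chains_card_image (f : ℕ → ℕ) (T : Finset ℕ) (hf : Set.InjOn f T) :
    (chains (T.image f)).card = (chains T).card := by
  have key : ∀ A ⊆ T, T.filter (fun x => f x ∈ A.image f) = A := by
    intro A hA
    ext x
    simp only [mem_filter, mem_image]
    constructor
    · rintro ⟨hx, a, ha, hfa⟩
      rwa [← hf (hA ha) hx hfa]
    · exact fun hx => ⟨hA hx, x, hx, rfl⟩
  refine card_nbij' (fun 𝒟 => 𝒟.image (fun B => T.filter (fun x => f x ∈ B)))
    (fun 𝒞 => 𝒞.image (Finset.image f)) ?_ ?_ ?_ ?_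
  · -- maps chains (T.image f) to chains T
    intro 𝒟 h𝒟
    rw [mem_coe, mem_chains] at h𝒟 ⊢
    obtain ⟨hsub, hne, hch, htop⟩ := h𝒟
    refine ⟨?_, ?_, ?_, ?_⟩
    · intro A hA
      obtain ⟨B, hB, rfl⟩ := mem_image.1 hA
      exact filter_subset _ _
    · intro A hA
      obtain ⟨B, hB, rfl⟩ := mem_image.1 hA
      obtain ⟨y, hy⟩ := hne B hB
      obtain ⟨x, hx, rfl⟩ := mem_image.1 (hsub B hB hy)
      exact ⟨x, mem_filter.2 ⟨hx, hy⟩⟩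
    · intro A hA A' hA'
      obtain ⟨B, hB, rfl⟩ := mem_image.1 hA
      obtain ⟨B', hB', rfl⟩ := mem_image.1 hA'
      rcases hch B hB B' hB' with h | h
      · left; intro x hx; simp only [mem_filter] at hx ⊢; exact ⟨hx.1, h hx.2⟩
      · right; intro x hx; simp only [mem_filter] at hx ⊢; exact ⟨hx.1, h hx.2⟩
    · intro hT
      have := htop (hT.image f)
      exact mem_image.2 ⟨T.image f, this, key T Subset.rfl⟩
  · -- maps chains T to chains (T.image f)
    intro 𝒞 h𝒞
    rw [mem_coe, mem_chains] at h𝒞 ⊢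
    obtain ⟨hsub, hne, hch, htop⟩ := h𝒞
    refine ⟨?_, ?_, ?_, ?_⟩
    · intro A hA
      obtain ⟨B, hB, rfl⟩ := mem_image.1 hA
      exact image_subset_image (hsub B hB)
    · intro A hA
      obtain ⟨B, hB, rfl⟩ := mem_image.1 hA
      exact (hne B hB).image f
    · intro A hA A' hA'
      obtain ⟨B, hB, rfl⟩ := mem_image.1 hA
      obtain ⟨B', hB', rfl⟩ := mem_image.1 hA'
      rcases hch B hB B' hB' with h | h
      · exact Or.inl (image_subset_image h)
      · exact Or.inr (image_subset_image h)
    · intro hT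
      obtain ⟨y, hy⟩ := hT
      obtain ⟨x, hx, rfl⟩ := mem_image.1 hy
      exact mem_image.2 ⟨T, htop ⟨x, hx⟩, rfl⟩
  · -- left inverse
    intro 𝒟 h𝒟
    rw [mem_coe, mem_chains] at h𝒟
    dsimp only
    rw [image_image]
    have hthis : ∀ B ∈ 𝒟, (Finset.image f (T.filter (fun x => f x ∈ B))) = B := by
      intro B hB
      ext y
      simp only [mem_image, mem_filter]
      constructor
      · rintro ⟨x, ⟨hx, hfx⟩, rfl⟩; exact hfx
      · intro hy
        obtain ⟨x, hx, rfl⟩ := mem_image.1 (h𝒟.1 B hB hy)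
        exact ⟨x, ⟨hx, hy⟩, rfl⟩
    calc 𝒟.image ((Finset.image f) ∘ (fun B => (T.filter (fun x => f x ∈ B))))
        = 𝒟.image id := image_congr (fun B hB => hthis B hB)
      _ = 𝒟 := image_id
  · -- right inverse
    intro 𝒞 h𝒞
    rw [mem_coe, mem_chains] at h𝒞
    dsimp only
    rw [image_image]
    calc 𝒞.image ((fun B => T.filter (fun x => f x ∈ B)) ∘ (Finset.image f))
        = 𝒞.image id := image_congr (fun B hB => key B (h𝒞.1 B hB))
      _ = 𝒞 := image_id

lemma chains_card_eq_of_card_eq {T T' : Finset ℕ} (h : T.card = T'.card) :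
    (chains T).card = (chains T').card := by
  have h' : Fintype.card { x // x ∈ T } = Fintype.card { x // x ∈ T' } := by
    simp [Fintype.card_coe, h]
  let e := Fintype.equivOfCardEq h'
  have hinj : Set.InjOn (fun x => if hx : x ∈ T then (e ⟨x, hx⟩ : ℕ) else 0) T := by
    intro a ha b hb hab
    have ha' : a ∈ T := ha
    have hb' : b ∈ T := hb
    simp only [dif_pos ha', dif_pos hb'] at hab
    have := e.injective (Subtype.ext hab)
    exact congrArg Subtype.val this
  have himg : T.image (fun x => if hx : x ∈ T then (e ⟨x, hx⟩ : ℕ) else 0) = T' := by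
    apply Finset.eq_of_subset_of_card_le
    · intro y hy
      obtain ⟨x, hx, rfl⟩ := mem_image.1 hy
      simp only [dif_pos hx]
      exact (e ⟨x, hx⟩).2
    · rw [Finset.card_image_of_injOn hinj, h]
  rw [← himg, chains_card_image _ T hinj]

/-- The recursion: split off the minimal element of a chain. -/
lemma chains_recursion (T : Finset ℕ) (hT : T.Nonempty) :
    (chains T).card = ∑ A ∈ T.powerset.erase ∅, (chains (T \ A)).card := by
  classical
  have cancel : ∀ A : Finset ℕ, ∀ B ⊆ T \ A, (B ∪ A) \ A = B := by
    intro A B hB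
    ext x
    simp only [mem_sdiff, mem_union]
    constructor
    · rintro ⟨hx | hx, hxA⟩
      · exact hx
      · exact absurd hx hxA
    · intro hx
      exact ⟨Or.inl hx, (mem_sdiff.1 (hB hx)).2⟩
  have hAnotmem : ∀ A : Finset ℕ, A.Nonempty → ∀ 𝒟 ∈ chains (T \ A),
      A ∉ 𝒟.image (· ∪ A) := by
    intro A hAne 𝒟 h𝒟 hmem
    obtain ⟨B, hB, hBA⟩ := mem_image.1 hmem
    rw [mem_chains] at h𝒟
    obtain ⟨x, hx⟩ := h𝒟.2.1 B hB
    have hxA : x ∈ A := hBA ▸ (mem_union.2 (Or.inl hx))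
    exact (mem_sdiff.1 (h𝒟.1 B hB hx)).2 hxA
  have leftinv : ∀ A : Finset ℕ, A.Nonempty → ∀ 𝒟 ∈ chains (T \ A),
      ((insert A (𝒟.image (· ∪ A))).erase A).image (· \ A) = 𝒟 := by
    intro A hAne 𝒟 h𝒟
    rw [Finset.erase_insert (hAnotmem A hAne 𝒟 h𝒟), image_image]
    rw [mem_chains] at h𝒟
    calc 𝒟.image ((· \ A) ∘ (· ∪ A))
        = 𝒟.image id := image_congr (fun B hB => cancel A B (h𝒟.1 B hB))
      _ = 𝒟 := image_id
  have hmaps : ∀ A ∈ T.powerset.erase ∅, ∀ 𝒟 ∈ chains (T \ A),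
      insert A (𝒟.image (· ∪ A)) ∈ chains T := by
    intro A hA 𝒟 h𝒟
    rw [mem_erase, mem_powerset] at hA
    obtain ⟨hAne, hAsub⟩ := hA
    have hAne' : A.Nonempty := nonempty_iff_ne_empty.2 hAne
    rw [mem_chains] at h𝒟 ⊢
    obtain ⟨hsub, hne, hch, htop⟩ := h𝒟
    refine ⟨?_, ?_, ?_, ?_⟩
    · intro B hB
      rcases mem_insert.1 hB with rfl | hB
      · exact hAsub
      · obtain ⟨B', hB', rfl⟩ := mem_image.1 hB
        exact union_subset ((hsub B' hB').trans (sdiff_subset)) hAsub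
    · intro B hB
      rcases mem_insert.1 hB with rfl | hB
      · exact hAne'
      · obtain ⟨B', hB', rfl⟩ := mem_image.1 hB
        exact hAne'.mono subset_union_right
    · intro B hB B' hB'
      rcases mem_insert.1 hB with rfl | hB
      · rcases mem_insert.1 hB' with rfl | hB'
        · exact Or.inl Subset.rfl
        · obtain ⟨B'', hB'', rfl⟩ := mem_image.1 hB'
          exact Or.inl subset_union_right
      · rcases mem_insert.1 hB' with rfl | hB'
        · obtain ⟨B'', hB'', rfl⟩ := mem_image.1 hB
          exact Or.inr subset_union_right
        · obtain ⟨B1, hB1, rfl⟩ := mem_image.1 hB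
          obtain ⟨B2, hB2, rfl⟩ := mem_image.1 hB'
          rcases hch B1 hB1 B2 hB2 with h | h
          · exact Or.inl (union_subset_union_left h)
          · exact Or.inr (union_subset_union_left h)
    · intro hT'
      by_cases hTA : (T \ A).Nonempty
      · have : T \ A ∈ 𝒟 := htop hTA
        have : (T \ A) ∪ A ∈ 𝒟.image (· ∪ A) := mem_image.2 ⟨T \ A, this, rfl⟩
        rw [sdiff_union_of_subset hAsub] at this
        exact mem_insert.2 (Or.inr this)
      · have : T ⊆ A := by
          intro x hx
          by_contra hxA
          exact hTA ⟨x, mem_sdiff.2 ⟨hx, hxA⟩⟩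
        have : A = T := Subset.antisymm hAsub this
        exact this ▸ mem_insert_self _ _
  have hunion : chains T = (T.powerset.erase ∅).biUnion
      (fun A => (chains (T \ A)).image (fun 𝒟 => insert A (𝒟.image (· ∪ A)))) := by
    ext 𝒞
    constructor
    · intro h𝒞
      rw [mem_chains] at h𝒞
      obtain ⟨hsub, hne, hch, htop⟩ := h𝒞
      have h𝒞ne : 𝒞.Nonempty := ⟨T, htop hT⟩
      obtain ⟨A, hA, hAmin⟩ := Finset.exists_min_image 𝒞 Finset.card h𝒞ne
      have hAle : ∀ B ∈ 𝒞, A ⊆ B := by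
        intro B hB
        rcases hch A hA B hB with h | h
        · exact h
        · exact (Finset.eq_of_subset_of_card_le h (hAmin B hB)) ▸ Subset.rfl
      rw [mem_biUnion]
      refine ⟨A, mem_erase.2 ⟨(hne A hA).ne_empty, mem_powerset.2 (hsub A hA)⟩,
        mem_image.2 ⟨(𝒞.erase A).image (· \ A), ?_, ?_⟩⟩
      · rw [mem_chains]
        refine ⟨?_, ?_, ?_, ?_⟩
        · intro B hB
          obtain ⟨B', hB', rfl⟩ := mem_image.1 hB
          exact sdiff_subset_sdiff (hsub B' (mem_of_mem_erase hB')) Subset.rfl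
        · intro B hB
          obtain ⟨B', hB', rfl⟩ := mem_image.1 hB
          rw [sdiff_nonempty]
          intro hcon
          exact (mem_erase.1 hB').1
            (Subset.antisymm hcon (hAle B' (mem_of_mem_erase hB')))
        · intro B hB B' hB'
          obtain ⟨B1, hB1, rfl⟩ := mem_image.1 hB
          obtain ⟨B2, hB2, rfl⟩ := mem_image.1 hB'
          rcases hch B1 (mem_of_mem_erase hB1) B2 (mem_of_mem_erase hB2) with h | h
          · exact Or.inl (sdiff_subset_sdiff h Subset.rfl)
          · exact Or.inr (sdiff_subset_sdiff h Subset.rfl)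
        · intro hTA
          have hTne : T ≠ A := by
            rintro rfl
            exact (sdiff_nonempty.1 hTA) Subset.rfl
          exact mem_image.2 ⟨T, mem_erase.2 ⟨hTne, htop hT⟩, rfl⟩
      · rw [image_image]
        have : ((𝒞.erase A).image ((· ∪ A) ∘ (· \ A))) = 𝒞.erase A := by
          calc (𝒞.erase A).image ((· ∪ A) ∘ (· \ A))
              = (𝒞.erase A).image id := image_congr (fun B hB => by
                simp only [Function.comp_apply, id_eq]
                rw [sdiff_union_of_subset (hAle B (mem_of_mem_erase hB))])
            _ = 𝒞.erase A := image_id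
        rw [this, insert_erase hA]
    · intro h𝒞
      rw [mem_biUnion] at h𝒞
      obtain ⟨A, hA, h𝒞'⟩ := h𝒞
      obtain ⟨𝒟, h𝒟, rfl⟩ := mem_image.1 h𝒞'
      exact hmaps A hA 𝒟 h𝒟
  rw [hunion]
  rw [Finset.card_biUnion]
  · refine Finset.sum_congr rfl (fun A hA => ?_)
    apply Finset.card_image_of_injOn
    intro 𝒟1 h1 𝒟2 h2 heq
    have hAne : A.Nonempty :=
      nonempty_iff_ne_empty.2 (mem_erase.1 hA).1
    dsimp only at heq
    rw [← leftinv A hAne 𝒟1 h1, ← leftinv A hAne 𝒟2 h2, heq]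
  · intro A hA A' hA' hAA'
    rw [Function.onFun, Finset.disjoint_left]
    intro 𝒞 h1 h2
    obtain ⟨𝒟1, hD1, hE1⟩ := mem_image.1 h1
    obtain ⟨𝒟2, hD2, hE2⟩ := mem_image.1 h2
    have hsub1 : A ⊆ A' := by
      have : A' ∈ 𝒞 := hE2 ▸ mem_insert_self _ _
      rw [← hE1] at this
      rcases mem_insert.1 this with h | h
      · exact h ▸ Subset.rfl
      · obtain ⟨B, hB, rfl⟩ := mem_image.1 h
        exact subset_union_right
    have hsub2 : A' ⊆ A := by
      have : A ∈ 𝒞 := hE1 ▸ mem_insert_self _ _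
      rw [← hE2] at this
      rcases mem_insert.1 this with h | h
      · exact h ▸ Subset.rfl
      · obtain ⟨B, hB, rfl⟩ := mem_image.1 h
        exact subset_union_right
    exact hAA' (Subset.antisymm hsub1 hsub2)
  done

lemma squarefree_prod_primes {T : Finset ℕ} (hT : ∀ p ∈ T, p.Prime) :
    Squarefree (∏ p ∈ T, p) := by
  classical
  induction T using Finset.induction_on with
  | empty => simpa using squarefree_one
  | @insert p T' hp ih =>
    rw [Finset.prod_insert hp]
    have hp' : p.Prime := hT p (mem_insert_self _ _)
    have hT' : ∀ q ∈ T', q.Prime := fun q hq => hT q (mem_insert_of_mem hq)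
    have hcop : p.Coprime (∏ q ∈ T', q) := by
      rw [hp'.coprime_iff_not_dvd]
      intro hdvd
      obtain ⟨q, hq, hpq⟩ := (hp'.prime.dvd_finset_prod_iff _).1 hdvd
      rw [((hT' q hq).dvd_iff_eq hp'.ne_one).1 hpq] at hq
      exact hp hq
    exact (Nat.squarefree_mul hcop).2 ⟨hp'.squarefree, ih hT'⟩

lemma one_lt_prod_iff {T : Finset ℕ} (hT : ∀ p ∈ T, p.Prime) :
    1 < ∏ p ∈ T, p ↔ T.Nonempty := by
  rw [← Nat.nonempty_primeFactors, Nat.primeFactors_prod hT]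

lemma C_prod (T : Finset ℕ) (hT : ∀ p ∈ T, p.Prime) :
    C (∏ p ∈ T, p) = (chains T).card := by
  classical
  set v := ∏ p ∈ T, p with hv
  have hv0 : v ≠ 0 := (Finset.prod_pos fun p hp => (hT p hp).pos).ne'
  have hsq : Squarefree v := squarefree_prod_primes hT
  have hpf : v.primeFactors = T := Nat.primeFactors_prod hT
  rw [C]
  refine card_nbij' (fun S => S.image Nat.primeFactors)
    (fun 𝒞 => 𝒞.image (fun A => ∏ p ∈ A, p)) ?_ ?_ ?_ ?_
  · -- maps into chains T
    intro S hS
    rw [mem_coe, mem_filter] at hS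
    obtain ⟨-, hdvd, hch, htop⟩ := hS
    rw [mem_coe, mem_chains]
    refine ⟨?_, ?_, ?_, ?_⟩
    · intro A hA
      obtain ⟨d, hd, rfl⟩ := mem_image.1 hA
      exact hpf ▸ Nat.primeFactors_mono (hdvd d hd).1 hv0
    · intro A hA
      obtain ⟨d, hd, rfl⟩ := mem_image.1 hA
      exact Nat.nonempty_primeFactors.2 (hdvd d hd).2
    · intro A hA B hB
      obtain ⟨d, hd, rfl⟩ := mem_image.1 hA
      obtain ⟨e, he, rfl⟩ := mem_image.1 hB
      have he0 : e ≠ 0 := ne_zero_of_dvd_ne_zero hv0 (hdvd e he).1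
      have hd0 : d ≠ 0 := ne_zero_of_dvd_ne_zero hv0 (hdvd d hd).1
      rcases hch d hd e he with h | h
      · exact Or.inl (Nat.primeFactors_mono h he0)
      · exact Or.inr (Nat.primeFactors_mono h hd0)
    · intro hTne
      have h1v : 1 < v := (one_lt_prod_iff hT).2 hTne
      exact mem_image.2 ⟨v, htop h1v, hpf⟩
  · -- maps into the C-set
    intro 𝒞 h𝒞
    rw [mem_coe, mem_chains] at h𝒞
    obtain ⟨hsub, hne, hch, htop⟩ := h𝒞
    have hdvd : ∀ A ∈ 𝒞, (∏ p ∈ A, p) ∣ v :=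
      fun A hA => Finset.prod_dvd_prod_of_subset A T _ (hsub A hA)
    rw [mem_coe, mem_filter]
    refine ⟨?_, ?_, ?_, ?_⟩
    · rw [mem_powerset]
      intro d hd
      obtain ⟨A, hA, rfl⟩ := mem_image.1 hd
      exact Nat.mem_divisors.2 ⟨hdvd A hA, hv0⟩
    · intro n hn
      obtain ⟨A, hA, rfl⟩ := mem_image.1 hn
      refine ⟨hdvd A hA, ?_⟩
      exact (one_lt_prod_iff fun p hp => hT p (hsub A hA hp)).2 (hne A hA)
    · intro a ha b hb
      obtain ⟨A, hA, rfl⟩ := mem_image.1 ha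
      obtain ⟨B, hB, rfl⟩ := mem_image.1 hb
      rcases hch A hA B hB with h | h
      · exact Or.inl (Finset.prod_dvd_prod_of_subset A B _ h)
      · exact Or.inr (Finset.prod_dvd_prod_of_subset B A _ h)
    · intro h1v
      have hTne : T.Nonempty := (one_lt_prod_iff hT).1 h1v
      exact mem_image.2 ⟨T, htop hTne, rfl⟩
  · -- left inverse
    intro S hS
    rw [mem_coe, mem_filter] at hS
    dsimp only
    rw [image_image]
    calc S.image ((fun A => ∏ p ∈ A, p) ∘ Nat.primeFactors)
        = S.image id := image_congr (fun d hd => by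
          simp only [Function.comp_apply, id_eq]
          exact Nat.prod_primeFactors_of_squarefree
            (hsq.squarefree_of_dvd (hS.2.1 d hd).1))
      _ = S := image_id
  · -- right inverse
    intro 𝒞 h𝒞
    rw [mem_coe, mem_chains] at h𝒞
    dsimp only
    rw [image_image]
    calc 𝒞.image (Nat.primeFactors ∘ (fun A => ∏ p ∈ A, p))
        = 𝒞.image id := image_congr (fun A hA => by
          simp only [Function.comp_apply, id_eq]
          exact Nat.primeFactors_prod (fun p hp => hT p (h𝒞.1 A hA hp)))
      _ = 𝒞 := image_id

/-- The set of the first `t` primes. -/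
noncomputable def firstPrimes (t : ℕ) : Finset ℕ :=
  (Finset.range t).image (Nat.nth Nat.Prime)

lemma nth_prime_injOn (s : Set ℕ) : Set.InjOn (Nat.nth Nat.Prime) s :=
  (Nat.nth_injective Nat.infinite_setOf_prime).injOn

lemma card_firstPrimes (t : ℕ) : (firstPrimes t).card = t := by
  rw [firstPrimes, Finset.card_image_of_injOn (nth_prime_injOn _), Finset.card_range]

lemma C_primorial (t : ℕ) : C (primorialProd t) = (chains (firstPrimes t)).card := by
  have h1 : primorialProd t = ∏ p ∈ firstPrimes t, p := by
    rw [firstPrimes, Finset.prod_image (fun a _ b _ h =>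
      Nat.nth_injective Nat.infinite_setOf_prime h), primorialProd]
  rw [h1, C_prod]
  intro p hp
  obtain ⟨j, hj, rfl⟩ := mem_image.1 hp
  exact Nat.prime_nth_prime j

end Aux15

theorem stmt_15 :
    C (primorialProd 0) = 1 ∧
    ∀ t : ℕ, 1 ≤ t →
      C (primorialProd t) = ∑ i ∈ Finset.range t, Nat.choose t i * C (primorialProd i) := by
  constructor
  · rw [Aux15.C_primorial]
    have : Aux15.firstPrimes 0 = ∅ := by simp [Aux15.firstPrimes]
    rw [this, Aux15.chains_empty, Finset.card_singleton]
  · intro t ht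
    classical
    set T := Aux15.firstPrimes t with hTdef
    have hTcard : T.card = t := Aux15.card_firstPrimes t
    have hTne : T.Nonempty := Finset.card_pos.1 (by omega)
    have step1 : C (primorialProd t) =
        ∑ A ∈ T.powerset.erase ∅, (Aux15.chains (T \ A)).card := by
      rw [Aux15.C_primorial, Aux15.chains_recursion T hTne]
    have step2 : ∀ A ∈ T.powerset.erase ∅,
        (Aux15.chains (T \ A)).card = C (primorialProd (t - A.card)) := by
      intro A hA
      rw [Finset.mem_erase, Finset.mem_powerset] at hA
      rw [Aux15.C_primorial]
      apply Aux15.chains_card_eq_of_card_eq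
      rw [Finset.card_sdiff_of_subset hA.2, hTcard, Aux15.card_firstPrimes]
    have step3 : C (primorialProd t) =
        ∑ A ∈ T.powerset.erase ∅, C (primorialProd (t - A.card)) := by
      rw [step1]
      exact Finset.sum_congr rfl step2
    -- sum over the full powerset, grouped by cardinality
    have hps : ∑ A ∈ T.powerset, C (primorialProd (t - A.card)) =
        ∑ j ∈ Finset.range (t + 1), Nat.choose t j * C (primorialProd (t - j)) := by
      rw [Finset.sum_powerset, hTcard]
      refine Finset.sum_congr rfl (fun j hj => ?_)
      rw [Finset.sum_congr rfl (g := fun _ => C (primorialProd (t - j)))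
        (fun A hA => by rw [(Finset.mem_powersetCard.1 hA).2]),
        Finset.sum_const, Finset.card_powersetCard, hTcard, smul_eq_mul]
    have hsplit : C (primorialProd (t - (∅ : Finset ℕ).card)) +
        ∑ A ∈ T.powerset.erase ∅, C (primorialProd (t - A.card)) =
        ∑ A ∈ T.powerset, C (primorialProd (t - A.card)) :=
 by
      rw [← Finset.insert_erase (Finset.empty_mem_powerset T),
        Finset.sum_insert (Finset.notMem_erase _ _), Finset.card_empty,
        Finset.erase_insert (Finset.notMem_erase _ _)]
    have hrange : ∑ j ∈ Finset.range (t + 1), Nat.choose t j * C (primorialProd (t - j)) =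
        (∑ j ∈ Finset.range t, Nat.choose t (j + 1) * C (primorialProd (t - (j + 1)))) +
          Nat.choose t 0 * C (primorialProd (t - 0)) :=
      Finset.sum_range_succ' _ t
    have key : C (primorialProd t) =
        ∑ j ∈ Finset.range t, Nat.choose t (j + 1) * C (primorialProd (t - (j + 1))) := by
      have := hsplit
      rw [← step3, hps, hrange] at this
      simp only [Finset.card_empty, Nat.sub_zero, Nat.choose_zero_right, one_mul] at this
      omega
    rw [key, ← Finset.sum_range_reflect (fun i => Nat.choose t i * C (primorialProd i)) t]
    refine Finset.sum_congr rfl (fun j hj => ?_)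
    rw [Finset.mem_range] at hj
    have h1 : t - 1 - j = t - (j + 1) := by omega
    have h2 : Nat.choose t (t - (j + 1)) = Nat.choose t (j + 1) := Nat.choose_symm (by omega)
    rw [h1, h2]
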